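/- Let ν > 1/2, n ≥ 1 and x ∈ [−1,1]. If 0 ≤ λ ≤ 1, then P^{(ν)*}_n(1, λ) > 0 and |P^{(ν)*}_n(x, λ)| ≤ P^{(ν)*}_n(1, λ). If 1 < λ < 2ν or λ < 0, then P^{(ν)*}_n(1, λ) > 0 and |P^{(ν)*}_n(x, λ)| ≤ (|2ν(2λ−1) − λ|/(2ν − λ)) · P^{(ν)*}_n(1, λ). -/

import Mathlib

open Polynomial Filter MeasureTheory

noncomputable section

/-- Recurrence coefficients `β_k = k(k+2ν−1)/(4(k+ν)(k+ν−1))` of the monic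
ultraspherical polynomials. -/
def ultraBeta (ν : ℝ) (k : ℕ) : ℝ :=
  k * (k + 2 * ν - 1) / (4 * (k + ν) * (k + ν - 1))

/-- Monic ultraspherical polynomials `P^{(ν)}_0 = 1`, `P^{(ν)}_1 = X`,
`P^{(ν)}_{k+1} = X·P^{(ν)}_k − β_k·P^{(ν)}_{k−1}`. -/
def ultraP (ν : ℝ) : ℕ → Polynomial ℝ
  | 0 => 1
  | 1 => X
  | (k + 2) => X * ultraP ν (k + 1) - C (ultraBeta ν (k + 1)) * ultraP ν k

/-- First-order numerator polynomials `Q^{(ν)}_0 = 1`, `Q^{(ν)}_1 = X`,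
`Q^{(ν)}_{k+1} = X·Q^{(ν)}_k − β_{k+1}·Q^{(ν)}_{k−1}`. -/
def ultraQ (ν : ℝ) : ℕ → Polynomial ℝ
  | 0 => 1
  | 1 => X
  | (k + 2) => X * ultraQ ν (k + 1) - C (ultraBeta ν (k + 2)) * ultraQ ν k

/-- Co-dilated ultraspherical polynomials: same recurrence as `ultraP ν`, except that
the single coefficient `β_1` is replaced by `λ·β_1`. -/
def ultraPstar (ν lam : ℝ) : ℕ → Polynomial ℝ
  | 0 => 1
  | 1 => X
  | (k + 2) => X * ultraPstar ν lam (k + 1) -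
      C (if k + 1 = 1 then lam * ultraBeta ν 1 else ultraBeta ν (k + 1)) * ultraPstar ν lam k

/-! ### Scalar lemmas about `ultraBeta` -/

lemma ultraBeta_pos (ν : ℝ) (hν : 1 / 2 < ν) (k : ℕ) (hk : 1 ≤ k) : 0 < ultraBeta ν k := by
  have hk' : (1 : ℝ) ≤ (k : ℝ) := by exact_mod_cast hk
  have h1 : (0:ℝ) < (k : ℝ) := by linarith
  have h2 : (0:ℝ) < (k : ℝ) + 2 * ν - 1 := by linarith
  have h3 : (0:ℝ) < (k : ℝ) + ν := by linarith
  have h4 : (0:ℝ) < (k : ℝ) + ν - 1 := by linarith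
  unfold ultraBeta
  positivity

lemma ultraBeta_half (k : ℕ) (hk : 1 ≤ k) :
    ultraBeta (1/2) k = (k:ℝ)^2 / (4 * (k:ℝ)^2 - 1) := by
  have hk' : (1 : ℝ) ≤ (k : ℝ) := by exact_mod_cast hk
  unfold ultraBeta
  rw [div_eq_div_iff (by nlinarith) (by nlinarith)]
  ring

lemma ultraBeta_le_half (ν : ℝ) (hν : 1 / 2 < ν) (k : ℕ) (hk : 1 ≤ k) :
    ultraBeta ν k ≤ ultraBeta (1/2) k := by
  have hk' : (1 : ℝ) ≤ (k : ℝ) := by exact_mod_cast hk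
  rw [ultraBeta_half k hk]
  unfold ultraBeta
  rw [div_le_div_iff₀ (by nlinarith) (by nlinarith)]
  nlinarith [sq_nonneg (2*ν - 1), sq_nonneg ((k:ℝ)*(2*ν-1))]

lemma ultraBeta_half_anti (j k : ℕ) (hj : 1 ≤ j) (hjk : j ≤ k) :
    ultraBeta (1/2) k ≤ ultraBeta (1/2) j := by
  have hk : 1 ≤ k := le_trans hj hjk
  have hj' : (1 : ℝ) ≤ (j : ℝ) := by exact_mod_cast hj
  have hjk' : (j : ℝ) ≤ (k : ℝ) := by exact_mod_cast hjk
  rw [ultraBeta_half j hj, ultraBeta_half k hk]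
  rw [div_le_div_iff₀ (by nlinarith) (by nlinarith)]
  nlinarith

lemma ultraBeta_half_pos (k : ℕ) (hk : 1 ≤ k) : 0 < ultraBeta (1/2) k := by
  have hk' : (1 : ℝ) ≤ (k : ℝ) := by exact_mod_cast hk
  rw [ultraBeta_half k hk]
  have : (0:ℝ) < 4 * (k:ℝ)^2 - 1 := by nlinarith
  positivity


lemma ultraP_zero (ν : ℝ) : ultraP ν 0 = 1 := by rw [ultraP]
lemma ultraP_one' (ν : ℝ) : ultraP ν 1 = X := by rw [ultraP]
lemma ultraP_rec (ν : ℝ) (k : ℕ) :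
    ultraP ν (k+2) = X * ultraP ν (k + 1) - C (ultraBeta ν (k + 1)) * ultraP ν k := by
  rw [ultraP]
lemma ultraQ_zero (ν : ℝ) : ultraQ ν 0 = 1 := by rw [ultraQ]
lemma ultraQ_one (ν : ℝ) : ultraQ ν 1 = X := by rw [ultraQ]
lemma ultraQ_rec (ν : ℝ) (k : ℕ) :
    ultraQ ν (k+2) = X * ultraQ ν (k + 1) - C (ultraBeta ν (k + 2)) * ultraQ ν k := by
  rw [ultraQ]
lemma ultraPstar_zero (ν lam : ℝ) : ultraPstar ν lam 0 = 1 := by rw [ultraPstar]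
lemma ultraPstar_one (ν lam : ℝ) : ultraPstar ν lam 1 = X := by rw [ultraPstar]
lemma ultraPstar_rec (ν lam : ℝ) (k : ℕ) :
    ultraPstar ν lam (k+2) = X * ultraPstar ν lam (k + 1) -
      C (if k + 1 = 1 then lam * ultraBeta ν 1 else ultraBeta ν (k + 1)) * ultraPstar ν lam k := by
  rw [ultraPstar]


/-- Connection coefficients of the `b`-family in the `g`-family. -/
def conn (g b : ℕ → ℝ) : ℕ → ℕ → ℝ
  | 0, k => if k = 0 then 1 else 0
  | 1, k => if k = 1 then 1 else 0
  | n + 2, k =>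
      (if k = 0 then 0 else conn g b (n + 1) (k - 1)) + g (k + 1) * conn g b (n + 1) (k + 1)
        - b (n + 1) * conn g b n k

variable (g b : ℕ → ℝ)

lemma conn_zero (k : ℕ) : conn g b 0 k = if k = 0 then 1 else 0 := by rw [conn]
lemma conn_one (k : ℕ) : conn g b 1 k = if k = 1 then 1 else 0 := by rw [conn]
lemma conn_rec (n k : ℕ) : conn g b (n+2) k =
      (if k = 0 then 0 else conn g b (n + 1) (k - 1)) + g (k + 1) * conn g b (n + 1) (k + 1)
        - b (n + 1) * conn g b n k := by rw [conn]

lemma conn_eq_zero : ∀ n k, n < k → conn g b n k = 0 := by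
  intro n
  induction n using Nat.twoStepInduction with
  | zero => intro k hk; rw [conn_zero]; simp; omega
  | one => intro k hk
           have : k ≠ 1 := by omega
           rw [conn_one]; simp [this]
  | more n ih1 ih2 =>
    intro k hk
    have h1 : conn g b (n+1) (k-1) = 0 := ih2 _ (by omega)
    have h2 : conn g b (n+1) (k+1) = 0 := ih2 _ (by omega)
    have h3 : conn g b n k = 0 := ih1 _ (by omega)
    rw [conn_rec, h1, h2, h3]; simp

lemma conn_diag : ∀ n, conn g b n n = 1 := by
  intro n
  induction n using Nat.twoStepInduction with
  | zero => simp [conn_zero]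
  | one => simp [conn_one]
  | more n ih1 ih2 =>
    have h2 : conn g b (n+1) (n+2+1) = 0 := conn_eq_zero g b _ _ (by omega)
    have h3 : conn g b n (n+2) = 0 := conn_eq_zero g b _ _ (by omega)
    rw [conn_rec, h2, h3]
    simp [ih2]

/-- Nonnegativity and the shift-monotonicity invariant. -/
lemma conn_invariant (hg : ∀ j, 1 ≤ j → 0 < g j)
    (hcomp : ∀ n j, 1 ≤ j → j ≤ n → b n ≤ g j) :
    ∀ n, (∀ k, 0 ≤ conn g b n k) ∧ (∀ k, conn g b n k ≤ conn g b (n+1) (k+1)) := by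
  intro n
  induction n using Nat.twoStepInduction with
  | zero =>
    constructor
    · intro k; rw [conn_zero]; split <;> norm_num
    · intro k; rw [conn_zero, conn_one]
      rcases eq_or_ne k 0 with hk | hk
      · subst hk; norm_num
      · have : k + 1 ≠ 1 := by omega
        simp [hk, this]
  | one =>
    have conn2 : ∀ k, conn g b 2 (k+1) = if k = 1 then 1 else 0 := by
      intro k
      rw [show (2:ℕ) = 0 + 2 by rfl, conn_rec]
      have e0 : conn g b 0 (k+1) = 0 := by rw [conn_zero]; simp
      have e2 : conn g b 1 (k+1+1) = 0 := by rw [conn_one]; simp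
      have hk1 : k + 1 ≠ 0 := by omega
      have ee : k + 1 - 1 = k := by omega
      rw [e0, e2, conn_one]
      simp [hk1, ee]
    constructor
    · intro k; rw [conn_one]; split <;> norm_num
    · intro k
      rw [conn_one, conn2]
  | more n ih1 ih2 =>
    have key : ∀ m k, (∀ j, 0 ≤ conn g b m j) →
        (∀ j, conn g b m j ≤ conn g b (m+1) (j+1)) →
        (0 ≤ conn g b (m+1) (k+1)) →
        0 ≤ g (k+1) * conn g b (m+1) (k+1) - b (m+1) * conn g b m k := by
      intro m k hm1 hm2 hpos
      rcases lt_or_ge m k with hmk | hmk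
      · rw [conn_eq_zero g b m k hmk, mul_zero, sub_zero]
        exact mul_nonneg (hg _ (by omega)).le hpos
      · have hb : b (m+1) ≤ g (k+1) := hcomp (m+1) (k+1) (by omega) (by omega)
        have h1 : conn g b m k ≤ conn g b (m+1) (k+1) := hm2 k
        have h0 : 0 ≤ conn g b m k := hm1 k
        have := mul_le_mul hb h1 h0 (hg (k+1) (by omega)).le
        linarith
    have ha : ∀ k, 0 ≤ conn g b (n+2) k := by
      intro k
      rw [conn_rec]
      have hkey := key n k ih1.1 ih1.2 (ih2.1 (k+1))
      have hfirst : (0:ℝ) ≤ if k = 0 then 0 else conn g b (n+1) (k-1) := by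
        split
        · exact le_refl 0
        · exact ih2.1 _
      linarith
    constructor
    · exact ha
    · intro k
      have e3 : n + 2 + 1 = (n + 1) + 2 := by omega
      rw [e3, conn_rec g b (n+1) (k+1)]
      have hkey := key (n+1) (k+1) ih2.1 ih2.2 (ha (k+2))
      have hk1 : k + 1 ≠ 0 := by omega
      have ee : k + 1 - 1 = k := by omega
      simp only [hk1, if_false, ee]
      linarith
section Expand
open Finset

lemma conn_expand (g b : ℕ → ℝ) (u v : ℕ → ℝ) (y : ℝ)
    (hu0 : u 0 = 1) (hu1 : u 1 = y) (hurec : ∀ k, u (k+2) = y * u (k+1) - b (k+1) * u k)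
    (hv0 : v 0 = 1) (hv1 : v 1 = y) (hvrec : ∀ k, v (k+2) = y * v (k+1) - g (k+1) * v k) :
    ∀ n, u n = ∑ k ∈ Finset.range (n+1), conn g b n k * v k := by
  intro n
  induction n using Nat.twoStepInduction with
  | zero => simp [conn_zero, hu0, hv0]
  | one =>
    rw [Finset.sum_range_succ, Finset.sum_range_one, conn_one, conn_one]
    simp [hu1, hv1]
  | more n ih1 ih2 =>
    have hS : ∑ k ∈ Finset.range (n+2+1), conn g b (n+2) k * v k
        = y * u (n+1) - b (n+1) * u n := by
      have split : ∀ k, conn g b (n+2) k * v k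
          = (if k = 0 then 0 else conn g b (n+1) (k-1)) * v k
            + g (k+1) * conn g b (n+1) (k+1) * v k
            - b (n+1) * conn g b n k * v k := by
        intro k; rw [conn_rec]; ring
      rw [Finset.sum_congr rfl (fun k _ => split k)]
      rw [Finset.sum_sub_distrib, Finset.sum_add_distrib]
      -- S1
      have hS1 : ∑ k ∈ Finset.range (n+3), (if k = 0 then 0 else conn g b (n+1) (k-1)) * v k
          = ∑ j ∈ Finset.range (n+2), conn g b (n+1) j * v (j+1) := by
        rw [Finset.sum_range_succ' _ (n+2)]
        simp
      -- S2
      have hS2 : ∑ k ∈ Finset.range (n+3), g (k+1) * conn g b (n+1) (k+1) * v k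
          = ∑ k ∈ Finset.range (n+1), g (k+1) * conn g b (n+1) (k+1) * v k := by
        rw [Finset.sum_range_succ, Finset.sum_range_succ,
          conn_eq_zero g b (n+1) (n+1+1) (by omega),
          conn_eq_zero g b (n+1) (n+2+1) (by omega)]
        ring
      -- S3
      have hS3 : ∑ k ∈ Finset.range (n+3), b (n+1) * conn g b n k * v k
          = b (n+1) * ∑ k ∈ Finset.range (n+1), conn g b n k * v k := by
        rw [Finset.sum_range_succ, Finset.sum_range_succ,
          conn_eq_zero g b n (n+1) (by omega), conn_eq_zero g b n (n+2) (by omega),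
          Finset.mul_sum]
        simp [mul_assoc]
      rw [hS1, hS2, hS3, ih2, ih1]
      -- now expand the left-hand side sums
      have hL : y * ∑ k ∈ Finset.range (n+2), conn g b (n+1) k * v k
          = (∑ j ∈ Finset.range (n+1), conn g b (n+1) (j+1) * v (j+2))
            + (∑ j ∈ Finset.range (n+1), g (j+1) * conn g b (n+1) (j+1) * v j)
            + conn g b (n+1) 0 * v 1 := by
        rw [Finset.mul_sum]
        rw [Finset.sum_range_succ' (fun k => y * (conn g b (n+1) k * v k)) (n+1)]
        have e0 : y * (conn g b (n+1) 0 * v 0) = conn g b (n+1) 0 * v 1 := by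
          rw [hv0, hv1]; ring
        have ej : ∀ j, y * (conn g b (n+1) (j+1) * v (j+1))
            = conn g b (n+1) (j+1) * v (j+2) + g (j+1) * conn g b (n+1) (j+1) * v j := by
          intro j
          have := hvrec j
          have hyv : y * v (j+1) = v (j+2) + g (j+1) * v j := by linarith
          calc y * (conn g b (n+1) (j+1) * v (j+1))
              = conn g b (n+1) (j+1) * (y * v (j+1)) := by ring
            _ = conn g b (n+1) (j+1) * (v (j+2) + g (j+1) * v j) := by rw [hyv]
            _ = conn g b (n+1) (j+1) * v (j+2) + g (j+1) * conn g b (n+1) (j+1) * v j := by ring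
        rw [Finset.sum_congr rfl (fun j _ => ej j), e0, Finset.sum_add_distrib]
      have hS1' : ∑ j ∈ Finset.range (n+2), conn g b (n+1) j * v (j+1)
          = (∑ i ∈ Finset.range (n+1), conn g b (n+1) (i+1) * v (i+2)) + conn g b (n+1) 0 * v 1 := by
        rw [Finset.sum_range_succ' (fun j => conn g b (n+1) j * v (j+1)) (n+1)]
      rw [hL, hS1']
      ring
    rw [hurec n, ih2, ih1]
    rw [hS, ih2, ih1]

end Expand

section Bound
open Polynomial

lemma conn_bound (g b : ℕ → ℝ) (G R : ℕ → Polynomial ℝ)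
    (hG0 : G 0 = 1) (hG1 : G 1 = X)
    (hGrec : ∀ k, G (k+2) = X * G (k+1) - C (g (k+1)) * G k)
    (hR0 : R 0 = 1) (hR1 : R 1 = X)
    (hRrec : ∀ k, R (k+2) = X * R (k+1) - C (b (k+1)) * R k)
    (hg : ∀ j, 1 ≤ j → 0 < g j)
    (hcomp : ∀ n j, 1 ≤ j → j ≤ n → b n ≤ g j)
    (x : ℝ)
    (hGmax : ∀ k, |(G k).eval x| ≤ (G k).eval 1)
    (hGpos : ∀ k, 0 < (G k).eval 1) (n : ℕ) :
    0 < (R n).eval 1 ∧ |(R n).eval x| ≤ (R n).eval 1 := by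
  have expand : ∀ y : ℝ, (R n).eval y
      = ∑ k ∈ Finset.range (n+1), conn g b n k * (G k).eval y := by
    intro y
    refine conn_expand g b (fun m => (R m).eval y) (fun m => (G m).eval y) y ?_ ?_ ?_ ?_ ?_ ?_ n
    · simp [hR0]
    · simp [hR1]
    · intro k; rw [hRrec k]; simp
    · simp [hG0]
    · simp [hG1]
    · intro k; rw [hGrec k]; simp
  have hnn : ∀ k, 0 ≤ conn g b n k := (conn_invariant g b hg hcomp n).1
  have hpos : 0 < (R n).eval 1 := by
    rw [expand 1]
    have hterm : ∀ k ∈ Finset.range (n+1), 0 ≤ conn g b n k * (G k).eval 1 :=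
      fun k _ => mul_nonneg (hnn k) (hGpos k).le
    have hmem : n ∈ Finset.range (n+1) := Finset.self_mem_range_succ n
    have := Finset.single_le_sum hterm hmem
    rw [conn_diag g b n] at this
    have := hGpos n
    linarith
  refine ⟨hpos, ?_⟩
  rw [expand x, expand 1]
  calc |∑ k ∈ Finset.range (n+1), conn g b n k * (G k).eval x|
      ≤ ∑ k ∈ Finset.range (n+1), |conn g b n k * (G k).eval x| :=
        Finset.abs_sum_le_sum_abs _ _
    _ ≤ ∑ k ∈ Finset.range (n+1), conn g b n k * (G k).eval 1 := by
        refine Finset.sum_le_sum fun k _ => ?_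
        rw [abs_mul, abs_of_nonneg (hnn k)]
        exact mul_le_mul_of_nonneg_left (hGmax k) (hnn k)

end Bound

/-- abbreviations for evaluation of Legendre-type polynomials -/
abbrev evL (n : ℕ) (x : ℝ) : ℝ := (ultraP (1/2) n).eval x
abbrev evD (n : ℕ) (x : ℝ) : ℝ := (derivative (ultraP (1/2) n)).eval x
abbrev evD2 (n : ℕ) (x : ℝ) : ℝ := (derivative (derivative (ultraP (1/2) n))).eval x

lemma evL_zero (x : ℝ) : evL 0 x = 1 := by unfold evL; simp [ultraP_zero]
lemma evL_one (x : ℝ) : evL 1 x = x := by unfold evL; simp [ultraP_one']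
lemma evL_rec (k : ℕ) (x : ℝ) :
    evL (k+2) x = x * evL (k+1) x - ultraBeta (1/2) (k+1) * evL k x := by
  unfold evL; rw [ultraP_rec]; simp

lemma evD_zero (x : ℝ) : evD 0 x = 0 := by unfold evD; simp [ultraP_zero]
lemma evD_one (x : ℝ) : evD 1 x = 1 := by unfold evD; simp [ultraP_one']
lemma evD_rec (k : ℕ) (x : ℝ) :
    evD (k+2) x = evL (k+1) x + x * evD (k+1) x - ultraBeta (1/2) (k+1) * evD k x := by
  unfold evD evL; rw [ultraP_rec]
  simp [derivative_mul]
  try ring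

lemma evD2_zero (x : ℝ) : evD2 0 x = 0 := by unfold evD2; simp [ultraP_zero]
lemma evD2_one (x : ℝ) : evD2 1 x = 0 := by unfold evD2; simp [ultraP_one']
lemma evD2_rec (k : ℕ) (x : ℝ) :
    evD2 (k+2) x = 2 * evD (k+1) x + x * evD2 (k+1) x - ultraBeta (1/2) (k+1) * evD2 k x := by
  unfold evD2 evD; rw [ultraP_rec]
  simp [derivative_mul]
  try ring

/-- structure relation -/
lemma legendre_struct : ∀ n : ℕ, ∀ x : ℝ,
    (1 - x^2) * evD (n+1) x
      = -((n:ℝ)+1) * x * evL (n+1) x + ((n:ℝ)+1)^2 / (2*(n:ℝ)+1) * evL n x := by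
  intro n
  induction n using Nat.twoStepInduction with
  | zero => intro x; rw [evD_one, evL_one, evL_zero]; norm_num; ring
  | one =>
    intro x
    have hb : ultraBeta (1/2) 1 = 1/3 := by rw [ultraBeta_half 1 le_rfl]; norm_num
    rw [evD_rec 0, evL_rec 0, evD_one, evD_zero, evL_one, evL_zero, hb]
    norm_num
    ring
  | more n ih1 ih2 =>
    intro x
    have hb1 : ultraBeta (1/2) (n+1) = ((n:ℝ)+1)^2 / (4*((n:ℝ)+1)^2 - 1) := by
      rw [ultraBeta_half (n+1) (by omega)]; push_cast; ring_nf
    have hb2 : ultraBeta (1/2) (n+2) = ((n:ℝ)+2)^2 / (4*((n:ℝ)+2)^2 - 1) := by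
      rw [ultraBeta_half (n+2) (by omega)]; push_cast; ring_nf
    have h3 := evL_rec (n+1) x
    have h2 := evL_rec n x
    have hd := evD_rec (n+1) x
    have i2 := ih2 x  -- (1-x²) evD (n+2) = -(n+2) x evL (n+2) + (n+2)²/(2n+3) evL (n+1)
    have i1 := ih1 x
    push_cast at h3 h2 hd i2 i1 ⊢
    rw [hb2] at h3 hd
    rw [hb1] at h2
    have d1 : (4*((n:ℝ)+2)^2 - 1) ≠ 0 := by nlinarith [Nat.cast_nonneg (α := ℝ) n]
    have d2 : (4*((n:ℝ)+1)^2 - 1) ≠ 0 := by nlinarith [Nat.cast_nonneg (α := ℝ) n]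
    have d2' : (3 + (n:ℝ)*8 + (n:ℝ)^2*4) ≠ 0 := by positivity
    have d3 : (2*(n:ℝ)+1) ≠ 0 := by nlinarith [Nat.cast_nonneg (α := ℝ) n]
    have d4 : (2*(n:ℝ)+3) ≠ 0 := by nlinarith [Nat.cast_nonneg (α := ℝ) n]
    have d5 : (2*(n:ℝ)+5) ≠ 0 := by nlinarith [Nat.cast_nonneg (α := ℝ) n]
    rw [hd, h3, h2]
    rw [h2] at i2
    linear_combination (norm := (field_simp; ring_nf; field_simp; ring)) x * i2
      - ((n:ℝ)+2)^2/(4*((n:ℝ)+2)^2 - 1) * i1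


/-- Legendre differential equation -/
lemma legendre_ode : ∀ n : ℕ, ∀ x : ℝ,
    (1 - x^2) * evD2 n x = 2 * x * evD n x - (n:ℝ)*((n:ℝ)+1) * evL n x := by
  intro n
  induction n using Nat.twoStepInduction with
  | zero => intro x; rw [evD2_zero, evD_zero, evL_zero]; norm_num
  | one => intro x; rw [evD2_one, evD_one, evL_one]; push_cast; ring
  | more n ih1 ih2 =>
    intro x
    have hb1 : ultraBeta (1/2) (n+1) = ((n:ℝ)+1)^2 / (4*((n:ℝ)+1)^2 - 1) := by
      rw [ultraBeta_half (n+1) (by omega)]; push_cast; ring_nf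
    have hd2 := evD2_rec n x
    have hdd := evD_rec n x
    have h2 := evL_rec n x
    have i2 := ih2 x
    have i1 := ih1 x
    have st := legendre_struct n x
    push_cast at hd2 hdd h2 i2 i1 st ⊢
    rw [hb1] at hd2 hdd h2
    have d2 : (4*((n:ℝ)+1)^2 - 1) ≠ 0 := by nlinarith [Nat.cast_nonneg (α := ℝ) n]
    have d2' : (3 + (n:ℝ)*8 + (n:ℝ)^2*4) ≠ 0 := by positivity
    have d3 : (2*(n:ℝ)+1) ≠ 0 := by nlinarith [Nat.cast_nonneg (α := ℝ) n]
    rw [hd2, hdd, h2]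
    linear_combination (norm := (field_simp; ring_nf; field_simp; ring)) x * i2
      - ((n:ℝ)+1)^2/(4*((n:ℝ)+1)^2 - 1) * i1 + 2 * st

lemma legendre_parity : ∀ n : ℕ, ∀ x : ℝ, evL n (-x) = (-1)^n * evL n x := by
  intro n
  induction n using Nat.twoStepInduction with
  | zero => intro x; rw [evL_zero, evL_zero]; norm_num
  | one => intro x; rw [evL_one, evL_one]; ring
  | more n ih1 ih2 =>
    intro x
    rw [evL_rec, evL_rec, ih1 x, ih2 x]
    ring

lemma legendre_one_pos : ∀ n : ℕ,
    0 < evL n 1 ∧ evL (n+1) 1 = ((n:ℝ)+1)/(2*(n:ℝ)+1) * evL n 1 := by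
  intro n
  induction n with
  | zero => rw [evL_zero, evL_one]; norm_num
  | succ n ih =>
    obtain ⟨hpos, hrat⟩ := ih
    have hb1 : ultraBeta (1/2) (n+1) = ((n:ℝ)+1)^2 / (4*((n:ℝ)+1)^2 - 1) := by
      rw [ultraBeta_half (n+1) (by omega)]; push_cast; ring_nf
    have hn0 : (0:ℝ) ≤ (n:ℝ) := Nat.cast_nonneg n
    have hpos1 : 0 < evL (n+1) 1 := by
      rw [hrat]
      have : 0 < ((n:ℝ)+1)/(2*(n:ℝ)+1) := by positivity
      positivity
    refine ⟨hpos1, ?_⟩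
    have h2 := evL_rec n 1
    rw [hb1, hrat] at h2
    push_cast at h2 ⊢
    rw [h2]
    rw [hrat]
    have d2 : (4*((n:ℝ)+1)^2 - 1) ≠ 0 := by nlinarith
    have d2' : (3 + (n:ℝ)*8 + (n:ℝ)^2*4) ≠ 0 := by positivity
    have d3 : (2*(n:ℝ)+1) ≠ 0 := by nlinarith
    have d4 : (2*(n:ℝ)+3) ≠ 0 := by nlinarith
    field_simp
    ring_nf
    field_simp
    ring


lemma legendre_sq_le (n : ℕ) (x : ℝ) (h1 : (0:ℝ) ≤ x) (h2 : x ≤ 1) :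
    (evL (n+1) x)^2 ≤ (evL (n+1) 1)^2 := by
  set m : ℕ := n + 1 with hm
  set lam : ℝ := (m:ℝ)*((m:ℝ)+1) with hlam
  have hlampos : 0 < lam := by
    have : (0:ℝ) < (m:ℝ) := by positivity
    positivity
  set P : Polynomial ℝ := ultraP (1/2) m with hP
  set F : Polynomial ℝ := C lam * P^2 + (1 - X^2) * (derivative P)^2 with hF
  have hFeval : ∀ t : ℝ, F.eval t = lam * (evL m t)^2 + (1-t^2)*(evD m t)^2 := by
    intro t; simp [hF]; try ring
  have hFderiv : ∀ t : ℝ, (derivative F).eval t = 2*t*(evD m t)^2 := by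
    intro t
    have hode := legendre_ode m t
    have hder : derivative F = C lam * (derivative P * P + P * derivative P)
        + (-(2:ℝ[X]) * X) * (derivative P)^2
        + (1 - X^2) * (derivative (derivative P) * derivative P
            + derivative P * derivative (derivative P)) := by
      simp [hF, derivative_mul, pow_two]
      try ring
    rw [hder]
    simp only [eval_add, eval_mul, eval_neg, eval_ofNat, eval_X, eval_C, eval_sub, eval_pow,
      eval_one]
    have e1 : P.eval t = evL m t := rfl
    have e2 : (derivative P).eval t = evD m t := rfl
    have e3 : (derivative (derivative P)).eval t = evD2 m t := rfl
    rw [e1, e2, e3]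
    linear_combination 2 * evD m t * hode
  have hcont : ContinuousOn (fun t : ℝ => F.eval t) (Set.Icc 0 1) :=
    (Polynomial.continuous F).continuousOn
  have hdiff : DifferentiableOn ℝ (fun t : ℝ => F.eval t) (interior (Set.Icc (0:ℝ) 1)) :=
    (Polynomial.differentiable F).differentiableOn
  have hmono : MonotoneOn (fun t : ℝ => F.eval t) (Set.Icc 0 1) := by
    refine monotoneOn_of_deriv_nonneg (convex_Icc 0 1) hcont hdiff ?_
    intro t ht
    rw [interior_Icc] at ht
    rw [Polynomial.deriv, hFderiv t]
    have := ht.1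
    positivity
  have hfx : F.eval x ≤ F.eval 1 :=
    hmono ⟨h1, h2⟩ ⟨zero_le_one, le_refl 1⟩ h2
  have hx1 : F.eval 1 = lam * (evL m 1)^2 := by rw [hFeval 1]; ring
  have hx2 : lam * (evL m x)^2 ≤ F.eval x := by
    rw [hFeval x]
    have h1x : (0:ℝ) ≤ 1 - x^2 := by nlinarith
    nlinarith [mul_nonneg h1x (sq_nonneg (evD m x))]
  have : lam * (evL m x)^2 ≤ lam * (evL m 1)^2 := by
    rw [← hx1]; exact le_trans hx2 hfx
  exact le_of_mul_le_mul_left this hlampos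

lemma legendre_abs_le (n : ℕ) (x : ℝ) (h1 : -1 ≤ x) (h2 : x ≤ 1) :
    |evL n x| ≤ evL n 1 := by
  match n with
  | 0 => rw [evL_zero, evL_zero]; norm_num
  | (m+1) =>
    have hpos : 0 < evL (m+1) 1 := (legendre_one_pos (m+1)).1
    have key : ∀ y : ℝ, 0 ≤ y → y ≤ 1 → |evL (m+1) y| ≤ evL (m+1) 1 := by
      intro y hy0 hy1
      have hsq := legendre_sq_le m y hy0 hy1
      have := Real.sqrt_le_sqrt hsq
      rw [Real.sqrt_sq_eq_abs, Real.sqrt_sq_eq_abs] at this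
      calc |evL (m+1) y| ≤ |evL (m+1) 1| := this
        _ = evL (m+1) 1 := abs_of_pos hpos
    rcases le_or_gt 0 x with hx | hx
    · exact key x hx h2
    · have hx' : x = -(-x) := by ring
      rw [hx', legendre_parity (m+1) (-x)]
      rw [abs_mul, abs_pow, abs_neg, abs_one, one_pow, one_mul]
      exact key (-x) (by linarith) (by linarith)


/-- `Eseq ν m = m! / (2^m (ν)_m)` -/
def Eseq (ν : ℝ) : ℕ → ℝ
  | 0 => 1
  | (m+1) => Eseq ν m * ((m:ℝ)+1) / (2*((m:ℝ)+ν))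

lemma Eseq_pos (ν : ℝ) (hν : 0 < ν) : ∀ m, 0 < Eseq ν m := by
  intro m
  induction m with
  | zero => rw [Eseq]; norm_num
  | succ m ih =>
    rw [Eseq]
    have h1 : (0:ℝ) < (m:ℝ)+1 := by positivity
    have h2 : (0:ℝ) < 2*((m:ℝ)+ν) := by positivity
    positivity

lemma ultraP_val_one (ν : ℝ) (hν : 0 < ν) : ∀ n : ℕ,
    0 < (ultraP ν n).eval 1 ∧
    (ultraP ν (n+1)).eval 1 = (2*ν+(n:ℝ))/(2*(ν+(n:ℝ))) * (ultraP ν n).eval 1 := by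
  intro n
  induction n with
  | zero =>
    rw [ultraP_zero, ultraP_one']
    norm_num
    rw [div_self (by positivity)]
  | succ n ih =>
    obtain ⟨hpos, hrat⟩ := ih
    have hn0 : (0:ℝ) ≤ (n:ℝ) := Nat.cast_nonneg n
    have hpos1 : 0 < (ultraP ν (n+1)).eval 1 := by
      rw [hrat]
      have : 0 < (2*ν+(n:ℝ))/(2*(ν+(n:ℝ))) := by positivity
      positivity
    refine ⟨hpos1, ?_⟩
    have h2 : (ultraP ν (n+2)).eval 1
        = 1 * (ultraP ν (n+1)).eval 1 - ultraBeta ν (n+1) * (ultraP ν n).eval 1 := by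
      rw [ultraP_rec]; simp
    have hbeta : ultraBeta ν (n+1) = ((n:ℝ)+1)*((n:ℝ)+2*ν)/(4*((n:ℝ)+1+ν)*((n:ℝ)+ν)) := by
      unfold ultraBeta; push_cast; ring_nf
    have d1 : (2*(ν+(n:ℝ))) ≠ 0 := by positivity
    have d2 : ((n:ℝ)+1+ν) ≠ 0 := by positivity
    have d3 : ((n:ℝ)+ν) ≠ 0 := by positivity
    have d4 : (2*ν+(n:ℝ)) ≠ 0 := by positivity
    push_cast
    rw [h2, hbeta, hrat]
    field_simp
    ring

lemma ultraQ_val_one (ν : ℝ) (hν : 1/2 < ν) : ∀ m : ℕ,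
    (2*ν-1) * (ultraQ ν m).eval 1 = 2*ν*((ultraP ν (m+1)).eval 1 - Eseq ν (m+1)) := by
  have hν0 : (0:ℝ) < ν := by linarith
  have hν1 : (0:ℝ) < 1 + ν := by linarith
  intro m
  induction m using Nat.twoStepInduction with
  | zero =>
    rw [ultraQ_zero, ultraP_one']
    have e1 : Eseq ν 1 = 1/(2*ν) := by simp [Eseq]
    rw [e1]
    simp
    field_simp
  | one =>
    rw [ultraQ_one]
    have e2 : Eseq ν 2 = 1/(2*ν) * 2 / (2*(1+ν)) := by simp [Eseq]; field_simp; ring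
    have p2 : (ultraP ν 2).eval 1 = 1 - ultraBeta ν 1 := by
      rw [ultraP_rec ν 0, ultraP_one', ultraP_zero]; simp
    have hb : ultraBeta ν 1 = 2*ν/(4*(1+ν)*ν) := by unfold ultraBeta; norm_num
    rw [e2, p2, hb]
    simp
    field_simp
    ring
  | more m ih1 ih2 =>
    have qe : (ultraQ ν (m+2)).eval 1
        = (ultraQ ν (m+1)).eval 1 - ultraBeta ν (m+2) * (ultraQ ν m).eval 1 := by
      rw [ultraQ_rec]; simp
    have pe : (ultraP ν (m+3)).eval 1
        = (ultraP ν (m+2)).eval 1 - ultraBeta ν (m+2) * (ultraP ν (m+1)).eval 1 := by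
      rw [show m+3 = (m+1)+2 from rfl, ultraP_rec]; simp
    have hE2 : Eseq ν (m+2) = Eseq ν (m+1) * ((m:ℝ)+2) / (2*((m:ℝ)+1+ν)) := by
      rw [show m+2 = (m+1)+1 from rfl, Eseq]; push_cast; ring
    have hE3 : Eseq ν (m+3) = Eseq ν (m+2) * ((m:ℝ)+3) / (2*((m:ℝ)+2+ν)) := by
      rw [show m+3 = (m+2)+1 from rfl, Eseq]; push_cast; ring
    have hbeta : ultraBeta ν (m+2)
        = ((m:ℝ)+2)*((m:ℝ)+1+2*ν)/(4*((m:ℝ)+2+ν)*((m:ℝ)+1+ν)) := by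
      unfold ultraBeta; push_cast; ring_nf
    have d1 : ((m:ℝ)+1+ν) ≠ 0 := by positivity
    have d2 : ((m:ℝ)+2+ν) ≠ 0 := by positivity
    have Ee : Eseq ν (m+3) = Eseq ν (m+2) - ultraBeta ν (m+2) * Eseq ν (m+1) := by
      rw [hE3, hE2, hbeta]
      field_simp
      ring
    have goal3 : (2*ν-1) * (ultraQ ν (m+2)).eval 1
        = 2*ν*((ultraP ν (m+3)).eval 1 - Eseq ν (m+3)) := by
      linear_combination (2*ν-1)*qe + ih2 - ultraBeta ν (m+2)*ih1 - 2*ν*pe + 2*ν*Ee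
    exact goal3

/-- decomposition of the co-dilated polynomials -/
lemma ultraPstar_decomp (ν lam : ℝ) : ∀ k : ℕ,
    ultraPstar ν lam (k+1) = C lam * ultraP ν (k+1) + C (1-lam) * (X * ultraQ ν k) := by
  intro k
  induction k using Nat.twoStepInduction with
  | zero =>
    rw [ultraPstar_one, ultraP_one', ultraQ_zero, C_sub, C_1]
    ring
  | one =>
    show ultraPstar ν lam (0+2) = C lam * ultraP ν (0+2) + C (1-lam) * (X * ultraQ ν 1)
    rw [ultraPstar_rec, ultraP_rec, ultraPstar_one, ultraPstar_zero,
      ultraP_one', ultraP_zero, ultraQ_one]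
    norm_num
    ring
  | more k ih1 ih2 =>
    have hps : ultraPstar ν lam (k+3) = X * ultraPstar ν lam (k+2)
        - C (ultraBeta ν (k+2)) * ultraPstar ν lam (k+1) := by
      rw [show k+3 = (k+1)+2 from rfl, ultraPstar_rec]
      norm_num
    have hp : ultraP ν (k+3) = X * ultraP ν (k+2) - C (ultraBeta ν (k+2)) * ultraP ν (k+1) := by
      rw [show k+3 = (k+1)+2 from rfl, ultraP_rec]
    have hq : ultraQ ν (k+2) = X * ultraQ ν (k+1) - C (ultraBeta ν (k+2)) * ultraQ ν k := by
      rw [ultraQ_rec]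
    rw [hps, hp, hq, ih2, ih1]
    ring


theorem codilated_ultraspherical_uniform_bound (ν : ℝ) (hν : 1 / 2 < ν)
    (n : ℕ) (hn : 1 ≤ n) (lam : ℝ) (x : ℝ) (hx : x ∈ Set.Icc (-1 : ℝ) 1) :
    (0 ≤ lam → lam ≤ 1 →
      0 < (ultraPstar ν lam n).eval 1 ∧
      |(ultraPstar ν lam n).eval x| ≤ (ultraPstar ν lam n).eval 1) ∧
    ((1 < lam ∧ lam < 2 * ν) ∨ lam < 0 →
      0 < (ultraPstar ν lam n).eval 1 ∧
      |(ultraPstar ν lam n).eval x| ≤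
        |2 * ν * (2 * lam - 1) - lam| / (2 * ν - lam) * (ultraPstar ν lam n).eval 1) := by
  obtain ⟨hx1, hx2⟩ := hx
  have hν0 : (0:ℝ) < ν := by linarith
  have habsx : |x| ≤ 1 := abs_le.mpr ⟨hx1, hx2⟩
  obtain ⟨m, rfl⟩ : ∃ m, n = m + 1 := ⟨n - 1, by omega⟩
  -- base (Legendre) family facts
  have hGmax : ∀ k, |(ultraP (1/2) k).eval x| ≤ (ultraP (1/2) k).eval 1 :=
    fun k => legendre_abs_le k x hx1 hx2
  have hGpos : ∀ k, 0 < (ultraP (1/2) k).eval 1 := fun k => (legendre_one_pos k).1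
  have hg : ∀ j, 1 ≤ j → 0 < ultraBeta (1/2) j := fun j hj => ultraBeta_half_pos j hj
  have hcompP : ∀ nn j, 1 ≤ j → j ≤ nn → ultraBeta ν nn ≤ ultraBeta (1/2) j := by
    intro nn j hj hjn
    exact le_trans (ultraBeta_le_half ν hν nn (le_trans hj hjn)) (ultraBeta_half_anti j nn hj hjn)
  have hPbound := conn_bound (ultraBeta (1/2)) (fun j => ultraBeta ν j)
    (ultraP (1/2)) (ultraP ν) (ultraP_zero _) (ultraP_one' _) (ultraP_rec _)
    (ultraP_zero _) (ultraP_one' _) (ultraP_rec _) hg hcompP x hGmax hGpos (m+1)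
  have hcompQ : ∀ nn j, 1 ≤ j → j ≤ nn → ultraBeta ν (nn+1) ≤ ultraBeta (1/2) j := by
    intro nn j hj hjn
    exact le_trans (ultraBeta_le_half ν hν (nn+1) (by omega))
      (ultraBeta_half_anti j (nn+1) hj (by omega))
  have hQbound := conn_bound (ultraBeta (1/2)) (fun j => ultraBeta ν (j+1))
    (ultraP (1/2)) (ultraQ ν) (ultraP_zero _) (ultraP_one' _) (ultraP_rec _)
    (ultraQ_zero _) (ultraQ_one _) (ultraQ_rec _) hg hcompQ x hGmax hGpos m
  have hSbound : lam ≤ 1 →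
      0 < (ultraPstar ν lam (m+1)).eval 1 ∧
      |(ultraPstar ν lam (m+1)).eval x| ≤ (ultraPstar ν lam (m+1)).eval 1 := by
    intro hlam1
    have hcompS : ∀ nn j, 1 ≤ j → j ≤ nn →
        (if nn = 1 then lam * ultraBeta ν 1 else ultraBeta ν nn) ≤ ultraBeta (1/2) j := by
      intro nn j hj hjn
      split
      · rename_i h1
        have hj1 : j = 1 := by omega
        subst hj1
        have hb1 : 0 < ultraBeta ν 1 := ultraBeta_pos ν hν 1 le_rfl
        have hb2 : ultraBeta ν 1 ≤ ultraBeta (1/2) 1 := ultraBeta_le_half ν hν 1 le_rfl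
        nlinarith [mul_nonneg (show (0:ℝ) ≤ 1 - lam by linarith) hb1.le]
      · exact hcompP nn j hj hjn
    exact conn_bound (ultraBeta (1/2))
      (fun j => if j = 1 then lam * ultraBeta ν 1 else ultraBeta ν j)
      (ultraP (1/2)) (ultraPstar ν lam) (ultraP_zero _) (ultraP_one' _) (ultraP_rec _)
      (ultraPstar_zero _ _) (ultraPstar_one _ _) (ultraPstar_rec _ _) hg hcompS x hGmax hGpos (m+1)
  constructor
  · intro _ hlam1
    exact hSbound hlam1
  · intro hcase
    have h2nl : ∀ l : ℝ, l < 2*ν → (0:ℝ) < 2*ν - l := fun l hl => by linarith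
    rcases hcase with ⟨hl1, hl2⟩ | hneg
    · -- 1 < lam < 2ν
      set p := (ultraP ν (m+1)).eval 1 with hp_def
      set q := (ultraQ ν m).eval 1 with hq_def
      have hp : 0 < p := hPbound.1
      have hq : 0 < q := hQbound.1
      have hPx : |(ultraP ν (m+1)).eval x| ≤ p := hPbound.2
      have hQx : |(ultraQ ν m).eval x| ≤ q := hQbound.2
      have hqp : (2*ν-1) * q ≤ 2*ν*p := by
        have hval := ultraQ_val_one ν hν m
        have hE := Eseq_pos ν hν0 (m+1)
        nlinarith [mul_pos (show (0:ℝ) < 2*ν by linarith) hE]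
      have hdec := ultraPstar_decomp ν lam m
      have he1 : (ultraPstar ν lam (m+1)).eval 1 = lam * p + (1-lam) * q := by
        rw [hdec]; simp [hp_def, hq_def]
      have hex : (ultraPstar ν lam (m+1)).eval x
          = lam * (ultraP ν (m+1)).eval x + (1-lam) * (x * (ultraQ ν m).eval x) := by
        rw [hdec]; simp
      have hpos : 0 < (ultraPstar ν lam (m+1)).eval 1 := by
        rw [he1]
        have key1 : (lam-1)*((2*ν-1)*q) ≤ (lam-1)*(2*ν*p) :=
          mul_le_mul_of_nonneg_left hqp (by linarith)
        nlinarith [mul_pos (h2nl lam hl2) hp]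
      refine ⟨hpos, ?_⟩
      have hA : 0 < 2*ν*(2*lam-1) - lam := by nlinarith
      rw [abs_of_pos hA, div_mul_eq_mul_div, le_div_iff₀ (h2nl lam hl2)]
      have hub : |(ultraPstar ν lam (m+1)).eval x| ≤ lam * p + (lam-1)*q := by
        rw [hex]
        calc |lam * (ultraP ν (m+1)).eval x + (1-lam) * (x * (ultraQ ν m).eval x)|
            ≤ |lam * (ultraP ν (m+1)).eval x| + |(1-lam) * (x * (ultraQ ν m).eval x)| :=
              abs_add_le _ _
          _ = lam * |(ultraP ν (m+1)).eval x| + (lam-1) * (|x| * |(ultraQ ν m).eval x|) := by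
              rw [abs_mul, abs_mul, abs_mul, abs_of_pos (show (0:ℝ) < lam by linarith),
                abs_of_neg (show (1-lam:ℝ) < 0 by linarith)]
              ring
          _ ≤ lam * p + (lam-1)*q := by
              have t1 : lam * |(ultraP ν (m+1)).eval x| ≤ lam * p :=
                mul_le_mul_of_nonneg_left hPx (by linarith)
              have t2 : |x| * |(ultraQ ν m).eval x| ≤ q := by
                calc |x| * |(ultraQ ν m).eval x| ≤ 1 * q := by
                      exact mul_le_mul habsx hQx (abs_nonneg _) zero_le_one
                  _ = q := one_mul q
              have t3 : (lam-1) * (|x| * |(ultraQ ν m).eval x|) ≤ (lam-1)*q :=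
                mul_le_mul_of_nonneg_left t2 (by linarith)
              linarith
      have key : (0:ℝ) ≤ 2*lam*(lam-1)*(2*ν*p - (2*ν-1)*q) := by
        apply mul_nonneg
        · apply mul_nonneg <;> linarith
        · linarith
      nlinarith [key, mul_le_mul_of_nonneg_right hub (h2nl lam hl2).le, he1]
    · -- lam < 0
      obtain ⟨hpos, hbound⟩ := hSbound (by linarith)
      refine ⟨hpos, ?_⟩
      have h2n : (0:ℝ) < 2*ν - lam := by linarith
      have hA : 2*ν*(2*lam-1) - lam < 0 := by
        nlinarith [mul_pos (show (0:ℝ) < 4*ν - 1 by linarith) (show (0:ℝ) < -lam by linarith)]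
      rw [abs_of_neg hA]
      have hC1 : (1:ℝ) ≤ (-(2*ν*(2*lam-1) - lam))/(2*ν-lam) := by
        rw [le_div_iff₀ h2n]
        nlinarith [mul_pos (show (0:ℝ) < -lam by linarith) (show (0:ℝ) < 2*ν-1 by linarith)]
      calc |(ultraPstar ν lam (m+1)).eval x| ≤ (ultraPstar ν lam (m+1)).eval 1 := hbound
        _ = 1 * (ultraPstar ν lam (m+1)).eval 1 := (one_mul _).symm
        _ ≤ (-(2*ν*(2*lam-1) - lam))/(2*ν-lam) * (ultraPstar ν lam (m+1)).eval 1 :=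
            mul_le_mul_of_nonneg_right hC1 hpos.le

end
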